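/- Let n ≥ 2 and let (f_α), α = 1,…,n²−1, be Hermitian n×n matrices with Tr f_α = 0 and Tr(f_α f_β) = δ_{αβ}. Let T be a real (n²−1)×(n²−1) matrix and y ∈ ℝ^{n²−1} such that the affine map x ↦ Tx + y maps the closed unit ball of ℝ^{n²−1} into itself. Define φ[T,y](a) = (Tr a/n)·1ₙ + (1/(n−1))·∑_α (Tx + √((n−1)/n)·(Tr a)·y)_α f_α, where x_α = Tr(a f_α). Then φ[T,y] is a linear, trace-preserving, positive map on M_n(ℂ): if a is positive semidefinite then so is φ[T,y](a). -/

import Mathlib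

open ComplexOrder Matrix

section Aux

variable {N m : ℕ}

private lemma aux_trace_herm (b : Matrix (Fin N) (Fin N) ℂ) (hb : b.IsHermitian) :
    b.trace = ∑ i, (hb.eigenvalues i : ℂ) := by
  conv_lhs => rw [hb.spectral_theorem, Unitary.conjStarAlgAut_apply]
  rw [Matrix.trace_mul_cycle, Unitary.coe_star_mul_self, Matrix.one_mul,
    Matrix.trace_diagonal]
  rfl

private lemma aux_trace_sq_herm (b : Matrix (Fin N) (Fin N) ℂ) (hb : b.IsHermitian) :
    (b * b).trace = ∑ i, ((hb.eigenvalues i : ℂ))^2 := by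
  set U : Matrix (Fin N) (Fin N) ℂ := (hb.eigenvectorUnitary : Matrix (Fin N) (Fin N) ℂ) with hU
  set D : Matrix (Fin N) (Fin N) ℂ := diagonal (RCLike.ofReal ∘ hb.eigenvalues) with hD
  have h1 : star U * U = 1 := by
    rw [hU]; exact Unitary.coe_star_mul_self _
  have hbb : b * b = U * (D * D) * star U := by
    conv_lhs => rw [hb.spectral_theorem, Unitary.conjStarAlgAut_apply]
    calc (U*D*star U) * (U*D*star U) = U*D*(star U*U)*(D*star U) := by noncomm_ring
      _ = U*(D*D)*star U := by rw [h1, Matrix.mul_one]; noncomm_ring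
  rw [hbb, Matrix.trace_mul_cycle, ← Matrix.mul_assoc, h1, Matrix.one_mul, hD,
    Matrix.diagonal_mul_diagonal, Matrix.trace_diagonal]
  simp [sq]

private lemma aux_key_numeric (hn : 2 ≤ N) (lam : Fin N → ℝ) (p q : ℝ) (hp : 0 ≤ p)
    (h1 : ∑ i, lam i = p) (h2 : ∑ i, (lam i)^2 = q) (hq : q ≤ p^2/(N-1)) :
    ∀ i, 0 ≤ lam i := by
  intro k
  by_contra hk
  push_neg at hk
  have hcard : (((Finset.univ : Finset (Fin N)).erase k).card : ℝ) = (N : ℝ) - 1 := by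
    rw [Finset.card_erase_of_mem (Finset.mem_univ k), Finset.card_univ, Fintype.card_fin]
    have : 1 ≤ N := by omega
    push_cast [Nat.cast_sub this]
    ring
  have hCS : (∑ i ∈ Finset.univ.erase k, lam i)^2
      ≤ ((N:ℝ)-1) * ∑ i ∈ Finset.univ.erase k, (lam i)^2 := by
    have := sq_sum_le_card_mul_sum_sq (s := Finset.univ.erase k) (f := lam)
    rwa [hcard] at this
  have e1 : ∑ i ∈ Finset.univ.erase k, lam i = p - lam k := by
    rw [← h1, Finset.sum_erase_eq_sub (Finset.mem_univ k)]
  have e2 : ∑ i ∈ Finset.univ.erase k, (lam i)^2 = q - (lam k)^2 := by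
    rw [← h2, Finset.sum_erase_eq_sub (Finset.mem_univ k)]
  rw [e1, e2] at hCS
  have hn' : (2:ℝ) ≤ N := by exact_mod_cast hn
  have hq' : ((N:ℝ)-1) * q ≤ p^2 := by
    have hpos : (0:ℝ) < (N:ℝ)-1 := by linarith
    calc ((N:ℝ)-1)*q ≤ ((N:ℝ)-1)*(p^2/((N:ℝ)-1)) := mul_le_mul_of_nonneg_left hq hpos.le
      _ = p^2 := by field_simp
  nlinarith [sq_nonneg (lam k),
    mul_pos (by linarith : (0:ℝ) < (N:ℝ)-1) (mul_pos (neg_pos.2 hk) (neg_pos.2 hk))]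

private lemma aux_trace_conj_mul_self_re_nonneg (g : Matrix (Fin N) (Fin N) ℂ) :
    0 ≤ ((gᴴ * g).trace).re := by
  have : (gᴴ * g).trace = ∑ i, ∑ j, (starRingEnd ℂ) (g j i) * g j i := by
    simp [Matrix.trace, Matrix.diag, Matrix.mul_apply, Matrix.conjTranspose_apply]
  rw [this]
  rw [Complex.re_sum]
  apply Finset.sum_nonneg
  intro i _
  rw [Complex.re_sum]
  apply Finset.sum_nonneg
  intro j _
  rw [← Complex.normSq_eq_conj_mul_self, Complex.ofReal_re]
  exact Complex.normSq_nonneg _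

/-- trace of square of `c•1 + ∑ u α • f α` for an orthonormal traceless family. -/
private lemma aux_trace_comb (f : Fin m → Matrix (Fin N) (Fin N) ℂ)
    (htraceless : ∀ α, Matrix.trace (f α) = 0)
    (horth : ∀ α β, Matrix.trace (f α * f β) = if α = β then 1 else 0)
    (c : ℂ) (u : Fin m → ℂ) :
    ((c • (1 : Matrix (Fin N) (Fin N) ℂ) + ∑ α, u α • f α) *
     (c • (1 : Matrix (Fin N) (Fin N) ℂ) + ∑ α, u α • f α)).trace
      = c^2 * N + ∑ α, (u α)^2 := by
  have hsum_tr : (∑ α, u α • f α).trace = 0 := by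
    simp [Matrix.trace_sum, Matrix.trace_smul, htraceless]
  have hmix : ((∑ α, u α • f α) * (∑ β, u β • f β)).trace = ∑ α, (u α)^2 := by
    rw [Finset.sum_mul_sum]
    rw [Matrix.trace_sum]
    have : ∀ α : Fin m, (∑ β, (u α • f α) * (u β • f β)).trace = (u α)^2 := by
      intro α
      rw [Matrix.trace_sum]
      have : ∀ β : Fin m, ((u α • f α) * (u β • f β)).trace
          = u α * u β * (if α = β then 1 else 0) := by
        intro β
        rw [Matrix.smul_mul, Matrix.mul_smul, Matrix.trace_smul, Matrix.trace_smul, horth]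
        simp only [smul_eq_mul]; ring
      simp only [this]
      simp [Finset.sum_ite_eq, sq]
    simp only [this]
  rw [add_mul, mul_add, mul_add, Matrix.trace_add, Matrix.trace_add, Matrix.trace_add]
  simp only [Matrix.smul_mul, Matrix.mul_smul, Matrix.one_mul, Matrix.mul_one, Matrix.trace_smul,
    Matrix.trace_one, hsum_tr, hmix, smul_eq_mul, mul_zero, Fintype.card_fin]
  ring

end Aux

/-- The map `φ[T,y]` of the main theorem, extended complex-linearly to `M_n(ℂ)`:
`φ[T,y](a) = (Tr a/n)·1 + (1/(n−1))·∑_α (T x + √((n−1)/n)·(Tr a)·y)_α f_α`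
with `x_β = Tr(a f_β)`. -/
noncomputable def phiTy (n : ℕ) (f : Fin (n ^ 2 - 1) → Matrix (Fin n) (Fin n) ℂ)
    (T : Matrix (Fin (n ^ 2 - 1)) (Fin (n ^ 2 - 1)) ℝ) (y : Fin (n ^ 2 - 1) → ℝ)
    (a : Matrix (Fin n) (Fin n) ℂ) : Matrix (Fin n) (Fin n) ℂ :=
  (Matrix.trace a / n) • (1 : Matrix (Fin n) (Fin n) ℂ) +
    (1 / ((n : ℂ) - 1)) • ∑ α, ((∑ β, (T α β : ℂ) * Matrix.trace (a * f β)) +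
      (Real.sqrt (((n : ℝ) - 1) / n) : ℂ) * Matrix.trace a * (y α : ℂ)) • f α

/-- Main theorem: every affine map `(T, y)` of `ℝ^{n²−1}` carrying the closed unit ball into
itself induces a positive, trace-preserving linear map `φ[T,y] : M_n(ℂ) → M_n(ℂ)`. -/
theorem stmt_6 (n : ℕ) (hn : 2 ≤ n) (f : Fin (n ^ 2 - 1) → Matrix (Fin n) (Fin n) ℂ)
    (hherm : ∀ α, (f α).IsHermitian) (htraceless : ∀ α, Matrix.trace (f α) = 0)
    (horth : ∀ α β, Matrix.trace (f α * f β) = if α = β then 1 else 0)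
    (T : Matrix (Fin (n ^ 2 - 1)) (Fin (n ^ 2 - 1)) ℝ) (y : Fin (n ^ 2 - 1) → ℝ)
    (hball : ∀ x : Fin (n ^ 2 - 1) → ℝ, x ⬝ᵥ x ≤ 1 →
      (T.mulVec x + y) ⬝ᵥ (T.mulVec x + y) ≤ 1) :
    IsLinearMap ℂ (phiTy n f T y) ∧
    (∀ a : Matrix (Fin n) (Fin n) ℂ, Matrix.trace (phiTy n f T y a) = Matrix.trace a) ∧
    (∀ a : Matrix (Fin n) (Fin n) ℂ, a.PosSemidef → (phiTy n f T y a).PosSemidef) := by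
  have hn0 : (n : ℂ) ≠ 0 := Nat.cast_ne_zero.mpr (by omega)
  have hnR : (2:ℝ) ≤ (n:ℝ) := by exact_mod_cast hn
  have hn1R : (0:ℝ) < (n:ℝ) - 1 := by linarith
  have htrpres : ∀ a : Matrix (Fin n) (Fin n) ℂ,
      Matrix.trace (phiTy n f T y a) = Matrix.trace a := by
    intro a
    simp only [phiTy, Matrix.trace_add, Matrix.trace_smul, Matrix.trace_sum, Matrix.trace_one,
      htraceless, smul_zero, Finset.sum_const_zero, smul_eq_mul, mul_zero, add_zero]
    simp only [Fintype.card_fin]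
    field_simp
  refine ⟨?_, htrpres, ?_⟩
  · constructor
    · intro a b
      simp only [phiTy, Matrix.trace_add, Matrix.add_mul, add_div]
      have key : ∀ α : Fin (n ^ 2 - 1),
          ((∑ β, (T α β : ℂ) * ((a * f β).trace + (b * f β).trace)) +
            (Real.sqrt (((n : ℝ) - 1) / n) : ℂ) * (a.trace + b.trace) * (y α : ℂ)) • f α =
          ((∑ β, (T α β : ℂ) * (a * f β).trace) +
            (Real.sqrt (((n : ℝ) - 1) / n) : ℂ) * a.trace * (y α : ℂ)) • f α +
          ((∑ β, (T α β : ℂ) * (b * f β).trace) +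
            (Real.sqrt (((n : ℝ) - 1) / n) : ℂ) * b.trace * (y α : ℂ)) • f α := by
        intro α
        rw [← add_smul]
        congr 1
        simp only [mul_add, Finset.sum_add_distrib]
        ring
      simp only [key, Finset.sum_add_distrib, smul_add, add_smul]
      abel
    · intro c a
      simp only [phiTy, Matrix.trace_smul, Matrix.smul_mul, smul_eq_mul]
      have key : ∀ α : Fin (n ^ 2 - 1),
          ((∑ β, (T α β : ℂ) * (c * (a * f β).trace)) +
            (Real.sqrt (((n : ℝ) - 1) / n) : ℂ) * (c * a.trace) * (y α : ℂ)) • f α =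
          c • (((∑ β, (T α β : ℂ) * (a * f β).trace) +
            (Real.sqrt (((n : ℝ) - 1) / n) : ℂ) * a.trace * (y α : ℂ)) • f α) := by
        intro α
        rw [smul_smul]
        congr 1
        rw [mul_add, Finset.mul_sum]
        congr 1
        · exact Finset.sum_congr rfl fun β _ => by ring
        · ring
      simp only [key, ← Finset.smul_sum]
      rw [smul_comm]
      simp only [smul_add, smul_smul]
      congr 1
      ring_nf
  -- positivity
  intro a hA
  have ha : a.IsHermitian := hA.1
  set lam : Fin n → ℝ := ha.eigenvalues with hlam
  set p : ℝ := ∑ i, lam i with hp_def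
  have hp : 0 ≤ p := Finset.sum_nonneg fun i _ => hA.eigenvalues_nonneg i
  have htrace_a : a.trace = (p : ℂ) := by
    rw [aux_trace_herm a ha, hp_def, hlam]; push_cast; rfl
  -- x is real
  set x : Fin (n ^ 2 - 1) → ℝ := fun β => ((a * f β).trace).re with hx_def
  have hx : ∀ β, (a * f β).trace = ((x β : ℝ) : ℂ) := by
    intro β
    have hc : star ((a * f β).trace) = (a * f β).trace := by
      rw [← Matrix.trace_conjTranspose, Matrix.conjTranspose_mul, (hherm β).eq, ha.eq,
        Matrix.trace_mul_comm]
    have hc' : (starRingEnd ℂ) ((a * f β).trace) = (a * f β).trace := hc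
    exact (Complex.conj_eq_iff_re.mp hc').symm
  -- trace a² = q ≤ p²
  set q : ℝ := ∑ i, (lam i)^2 with hq_def
  have htrace_aa : (a * a).trace = (q : ℂ) := by
    rw [aux_trace_sq_herm a ha, hq_def, hlam]; push_cast; rfl
  have hqp : q ≤ p^2 := by
    rw [hq_def, hp_def]
    exact Finset.sum_sq_le_sq_sum_of_nonneg fun i _ => hA.eigenvalues_nonneg i
  -- Bessel: x ⬝ᵥ x ≤ q - p²/n
  have hbessel : x ⬝ᵥ x ≤ q - p^2/n := by
    set g : Matrix (Fin n) (Fin n) ℂ :=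
      a - ((p/n : ℝ) : ℂ) • 1 - ∑ α, ((x α : ℝ) : ℂ) • f α with hg_def
    have hg_herm : gᴴ = g := by
      rw [hg_def]
      simp only [Matrix.conjTranspose_sub, Matrix.conjTranspose_smul, Matrix.conjTranspose_one,
        Matrix.conjTranspose_sum, ha.eq]
      congr 1
      · rw [Complex.star_def, Complex.conj_ofReal]
      · apply Finset.sum_congr rfl
        intro α _
        rw [Complex.star_def, Complex.conj_ofReal, (hherm α).eq]
    have hX : (a * ∑ α, ((x α : ℝ) : ℂ) • f α).trace = ((x ⬝ᵥ x : ℝ) : ℂ) := by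
      rw [Finset.mul_sum, Matrix.trace_sum]
      simp only [Matrix.mul_smul, Matrix.trace_smul, hx, smul_eq_mul]
      rw [dotProduct]
      push_cast
      rfl
    have hHH : ((∑ α, ((x α : ℝ) : ℂ) • f α) * ∑ β, ((x β : ℝ) : ℂ) • f β).trace
        = ((x ⬝ᵥ x : ℝ) : ℂ) := by
      rw [Finset.sum_mul_sum, Matrix.trace_sum]
      have : ∀ α : Fin (n ^ 2 - 1),
          (∑ β, (((x α : ℝ) : ℂ) • f α) * (((x β : ℝ) : ℂ) • f β)).trace
            = ((x α : ℝ) : ℂ)^2 := by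
        intro α
        rw [Matrix.trace_sum]
        have : ∀ β : Fin (n ^ 2 - 1), ((((x α : ℝ) : ℂ) • f α) * (((x β : ℝ) : ℂ) • f β)).trace
            = ((x α : ℝ) : ℂ) * ((x β : ℝ) : ℂ) * (if α = β then 1 else 0) := by
          intro β
          rw [Matrix.smul_mul, Matrix.mul_smul, Matrix.trace_smul, Matrix.trace_smul, horth]
          simp only [smul_eq_mul]; ring
        simp only [this]
        simp [Finset.sum_ite_eq, sq]
      simp only [this]
      rw [dotProduct]
      push_cast
      simp [sq]
    have hXa : ((∑ α, ((x α : ℝ) : ℂ) • f α) * a).trace = ((x ⬝ᵥ x : ℝ) : ℂ) := by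
      rw [Matrix.trace_mul_comm]; exact hX
    have hftr : (∑ α, ((x α : ℝ) : ℂ) • f α).trace = 0 := by
      simp [Matrix.trace_sum, Matrix.trace_smul, htraceless]
    have hgg : (g * g).trace = ((q - p^2/n - x ⬝ᵥ x : ℝ) : ℂ) := by
      rw [hg_def]
      simp only [Matrix.sub_mul, Matrix.mul_sub, Matrix.trace_sub, Matrix.smul_mul,
        Matrix.mul_smul, Matrix.one_mul, Matrix.mul_one, Matrix.trace_smul, htrace_aa, hX, hHH,
        hXa, hftr, htrace_a, Matrix.trace_one, Fintype.card_fin, smul_eq_mul, mul_zero, smul_zero]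
      push_cast
      field_simp
      ring
    have h0 : 0 ≤ ((g * g).trace).re := by
      have := aux_trace_conj_mul_self_re_nonneg g
      rwa [hg_herm] at this
    rw [hgg, Complex.ofReal_re] at h0
    linarith
  have hxx : x ⬝ᵥ x ≤ ((n:ℝ)-1)/n * p^2 := by
    have : q - p^2/n ≤ ((n:ℝ)-1)/n * p^2 := by
      have h1 : p^2 - p^2/n = ((n:ℝ)-1)/n * p^2 := by field_simp
      linarith
    linarith
  -- z bound
  set r : ℝ := Real.sqrt (((n:ℝ)-1)/n) * p with hr_def
  have hsq : Real.sqrt (((n:ℝ)-1)/n) ^ 2 = ((n:ℝ)-1)/n := by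
    rw [Real.sq_sqrt]; positivity
  have hr2 : r^2 = ((n:ℝ)-1)/n * p^2 := by rw [hr_def, mul_pow, hsq]
  have hr0 : 0 ≤ r := mul_nonneg (Real.sqrt_nonneg _) hp
  set z : Fin (n ^ 2 - 1) → ℝ := T.mulVec x + r • y with hz_def
  have hzz : z ⬝ᵥ z ≤ ((n:ℝ)-1)/n * p^2 := by
    rcases eq_or_lt_of_le hr0 with hr0' | hrpos
    · -- r = 0, hence p = 0, hence x = 0
      have hs_pos : 0 < Real.sqrt (((n:ℝ)-1)/n) := Real.sqrt_pos.mpr (by positivity)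
      have hp0 : p = 0 := by
        rcases mul_eq_zero.mp hr0'.symm with h | h
        · exact absurd h hs_pos.ne'
        · exact h
      have hx0 : x = 0 := by
        have hxx0 : x ⬝ᵥ x ≤ 0 := by rw [hp0] at hxx; simpa using hxx
        have hnn : 0 ≤ x ⬝ᵥ x := Finset.sum_nonneg fun i _ => mul_self_nonneg _
        have : x ⬝ᵥ x = 0 := le_antisymm hxx0 hnn
        funext i
        have := (Finset.sum_eq_zero_iff_of_nonneg
          (fun j _ => mul_self_nonneg (x j))).mp this i (Finset.mem_univ i)
        exact mul_self_eq_zero.mp this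
      have hz0 : z = 0 := by
        rw [hz_def, hx0, ← hr0']
        simp [Matrix.mulVec_zero]
      rw [hz0]
      simp only [zero_dotProduct]
      positivity
    · -- r > 0
      set x' : Fin (n ^ 2 - 1) → ℝ := r⁻¹ • x with hx'_def
      have hx'1 : x' ⬝ᵥ x' ≤ 1 := by
        rw [hx'_def, smul_dotProduct, dotProduct_smul, smul_eq_mul, smul_eq_mul]
        have hle : x ⬝ᵥ x ≤ r^2 := by rw [hr2]; exact hxx
        have hmono : r⁻¹ * (r⁻¹ * (x ⬝ᵥ x)) ≤ r⁻¹ * (r⁻¹ * r^2) :=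
          mul_le_mul_of_nonneg_left (mul_le_mul_of_nonneg_left hle (by positivity))
            (by positivity)
        have h2 : r⁻¹ * (r⁻¹ * r^2) = 1 := by
          rw [sq]
          field_simp
        linarith
      have hb1 := hball x' hx'1
      have hzr : z = r • (T.mulVec x' + y) := by
        rw [hz_def, hx'_def, smul_add]
        congr 1
        rw [Matrix.mulVec_smul, smul_smul, mul_inv_cancel₀ hrpos.ne', one_smul]
      rw [hzr, smul_dotProduct, dotProduct_smul, smul_eq_mul, smul_eq_mul,
        ← mul_assoc, ← sq]
      calc r^2 * ((T.mulVec x' + y) ⬝ᵥ (T.mulVec x' + y)) ≤ r^2 * 1 :=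
            mul_le_mul_of_nonneg_left hb1 (sq_nonneg r)
        _ = ((n:ℝ)-1)/n * p^2 := by rw [mul_one, hr2]
  -- rewrite phiTy a
  set w : Fin (n ^ 2 - 1) → ℝ := fun α => z α / ((n:ℝ)-1) with hw_def
  have hb_eq : phiTy n f T y a = ((p/n : ℝ) : ℂ) • 1 + ∑ α, ((w α : ℝ) : ℂ) • f α := by
    rw [phiTy, htrace_a, Finset.smul_sum]
    congr 1
    · norm_cast
    · apply Finset.sum_congr rfl
      intro α _
      rw [smul_smul]
      congr 1
      simp only [hx, hw_def, hz_def, hr_def, Pi.add_apply, Pi.smul_apply, smul_eq_mul,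
        Matrix.mulVec, dotProduct]
      push_cast
      have hne : ((n:ℂ) - 1) ≠ 0 := by
        simp only [Ne, sub_eq_zero]
        intro h
        have hn1 : (1:ℕ) = n := by exact_mod_cast h.symm
        omega
      ring
  -- Hermitian
  have hb_herm : (phiTy n f T y a).IsHermitian := by
    rw [hb_eq]
    show _ᴴ = _
    simp only [Matrix.conjTranspose_add, Matrix.conjTranspose_smul, Matrix.conjTranspose_one,
      Matrix.conjTranspose_sum, Complex.star_def, Complex.conj_ofReal]
    congr 1
    apply Finset.sum_congr rfl
    intro α _
    rw [(hherm α).eq]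
  -- traces of b
  have htr_b : (phiTy n f T y a).trace = (p : ℂ) := by rw [htrpres a, htrace_a]
  have htr_bb : ((phiTy n f T y a) * (phiTy n f T y a)).trace
      = (((p/n)^2 * n + ∑ α, (w α)^2 : ℝ) : ℂ) := by
    rw [hb_eq, aux_trace_comb f htraceless horth]
    push_cast
    ring
  set mu : Fin n → ℝ := hb_herm.eigenvalues with hmu
  have h1 : ∑ i, mu i = p := by
    have h := aux_trace_herm _ hb_herm
    rw [htr_b] at h
    exact_mod_cast h.symm
  have h2 : ∑ i, (mu i)^2 = (p/n)^2 * n + ∑ α, (w α)^2 := by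
    have h := aux_trace_sq_herm _ hb_herm
    rw [htr_bb] at h
    exact_mod_cast h.symm
  have hw_sum : ∑ α, (w α)^2 ≤ p^2/(n*((n:ℝ)-1)) := by
    have he : ∑ α, (w α)^2 = (z ⬝ᵥ z)/((n:ℝ)-1)^2 := by
      rw [dotProduct, Finset.sum_div]
      apply Finset.sum_congr rfl
      intro α _
      rw [hw_def]
      rw [div_pow, sq (z α)]
    rw [he]
    have hd : (0:ℝ) < ((n:ℝ)-1)^2 := pow_pos hn1R 2
    have hb2 : (z ⬝ᵥ z)/((n:ℝ)-1)^2 ≤ (((n:ℝ)-1)/n * p^2)/((n:ℝ)-1)^2 := by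
      gcongr
    calc (z ⬝ᵥ z)/((n:ℝ)-1)^2 ≤ (((n:ℝ)-1)/n * p^2)/((n:ℝ)-1)^2 := hb2
      _ = p^2/(n*((n:ℝ)-1)) := by
          field_simp
  have hqle : (p/n)^2 * n + ∑ α, (w α)^2 ≤ p^2/((n:ℝ)-1) := by
    have heq : (p/n)^2 * n + p^2/(n*((n:ℝ)-1)) = p^2/((n:ℝ)-1) := by
      have hnne : (n:ℝ) ≠ 0 := by linarith
      field_simp
      ring
    linarith
  have hnonneg := aux_key_numeric hn mu p ((p/n)^2 * n + ∑ α, (w α)^2) hp h1 h2 hqle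
  exact (Matrix.IsHermitian.posSemidef_iff_eigenvalues_nonneg hb_herm).mpr hnonneg
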